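/- Suppose ℓ_n converges to a limit ℓ with ℓ < 1, and suppose there exist constants c > 0 and s ∈ (ℓ, 1) such that μ_n ≥ c·s^n for all n ≥ 1 (the service rates decay no faster than a geometric series with rate exceeding ℓ). Then the expected delay is finite: Σ_{n=1}^∞ q_n/μ_n < ∞. -/

import Mathlib

open Filter

/-- The recursively defined overflow Laplace–Stieltjes transforms:
`ovLST L0 ms 0 = L0` and
`ovLST L0 ms n s = L_{n-1}(μ_n + s) / (1 - L_{n-1}(s) + L_{n-1}(μ_n + s))`. -/
noncomputable def ovLST (L0 : ℝ → ℝ) (ms : ℕ → ℝ) : ℕ → ℝ → ℝ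
  | 0 => L0
  | n + 1 => fun s =>
      ovLST L0 ms n (ms (n + 1) + s) /
        (1 - ovLST L0 ms n s + ovLST L0 ms n (ms (n + 1) + s))

/-- The blocking probability of the first `n` servers: `p_n = ∏_{i=1}^n L_{i-1}(μ_i)`. -/
noncomputable def blockP (L0 : ℝ → ℝ) (ms : ℕ → ℝ) (n : ℕ) : ℝ :=
  ∏ i ∈ Finset.Icc 1 n, ovLST L0 ms (i - 1) (ms i)

lemma ov_good (L0 : ℝ → ℝ) (ms : ℕ → ℝ) (hms : ∀ n, 1 ≤ n → 0 < ms n)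
    (hL00 : L0 0 = 1) (hL0pos : ∀ s, 0 ≤ s → 0 < L0 s)
    (hL0anti : StrictAntiOn L0 (Set.Ici 0)) :
    ∀ n, (∀ s, 0 ≤ s → 0 < ovLST L0 ms n s) ∧ ovLST L0 ms n 0 = 1 ∧
      StrictAntiOn (ovLST L0 ms n) (Set.Ici 0) := by
  intro n
  induction n with
  | zero => exact ⟨hL0pos, hL00, hL0anti⟩
  | succ n ih =>
    obtain ⟨hpos, h0, hanti⟩ := ih
    set f := ovLST L0 ms n with hf
    have hμ : 0 < ms (n + 1) := hms (n + 1) (Nat.le_add_left 1 n)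
    have hle : ∀ x, 0 ≤ x → f x ≤ 1 := by
      intro x hx
      rcases eq_or_lt_of_le hx with h | h
      · rw [← h, h0]
      · rw [← h0]
        exact le_of_lt (hanti (Set.mem_Ici.2 le_rfl) (Set.mem_Ici.2 hx) h)
    have key : ∀ x, 0 ≤ x →
        ovLST L0 ms (n + 1) x = f (ms (n + 1) + x) / (1 - f x + f (ms (n + 1) + x)) := by
      intro x _; rfl
    have hNpos : ∀ x, 0 ≤ x → 0 < f (ms (n + 1) + x) := fun x hx =>
      hpos _ (by linarith)
    have hden : ∀ x, 0 ≤ x → 0 < 1 - f x + f (ms (n + 1) + x) := by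
      intro x hx
      have := hle x hx
      have := hNpos x hx
      linarith
    refine ⟨?_, ?_, ?_⟩
    · intro x hx
      rw [key x hx]
      exact div_pos (hNpos x hx) (hden x hx)
    · rw [key 0 le_rfl, h0, add_zero]
      have := hNpos 0 le_rfl
      rw [add_zero] at this
      field_simp
      ring
    · intro a ha b hb hab
      rw [Set.mem_Ici] at ha hb
      rw [key a ha, key b hb]
      have hNa := hNpos a ha
      have hNb := hNpos b hb
      have hNab : f (ms (n + 1) + b) < f (ms (n + 1) + a) :=
        hanti (Set.mem_Ici.2 (by linarith)) (Set.mem_Ici.2 (by linarith)) (by linarith)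
      have hfa : f b < f a := hanti (Set.mem_Ici.2 ha) (Set.mem_Ici.2 hb) hab
      have hta : 0 ≤ 1 - f a := by have := hle a ha; linarith
      rw [div_lt_div_iff₀ (hden b hb) (hden a ha)]
      nlinarith [mul_pos hNa hNb]

theorem stmt_13
    (μ : ℝ) (hμ : 0 < μ) (ms : ℕ → ℝ)
    (hms : ∀ n, 1 ≤ n → 0 < ms n)
    (hsum : HasSum (fun n => ms (n + 1)) μ)
    (L0 : ℝ → ℝ) (hL00 : L0 0 = 1)
    (hL0pos : ∀ s, 0 ≤ s → 0 < L0 s)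
    (hL0anti : StrictAntiOn L0 (Set.Ici 0))
    (hL0lim : Tendsto L0 atTop (nhds 0))
    (l : ℝ) (hl1 : l < 1)
    (hl : Tendsto (fun n => ovLST L0 ms n (ms (n + 1))) atTop (nhds l))
    (c s : ℝ) (hc : 0 < c) (hsl : l < s) (hs1 : s < 1)
    (hbound : ∀ n, 1 ≤ n → c * s ^ n ≤ ms n) :
    Summable (fun n : ℕ =>
      (blockP L0 ms n - blockP L0 ms (n + 1)) / ms (n + 1)) := by
  have hgood := ov_good L0 ms hms hL00 hL0pos hL0anti
  -- ℓ_{n+1} ∈ (0,1)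
  have hℓpos : ∀ n : ℕ, 0 < ovLST L0 ms n (ms (n + 1)) := fun n =>
    (hgood n).1 _ (le_of_lt (hms (n + 1) (Nat.le_add_left 1 n)))
  have hℓlt1 : ∀ n : ℕ, ovLST L0 ms n (ms (n + 1)) < 1 := by
    intro n
    have := (hgood n).2.2 (Set.mem_Ici.2 le_rfl)
      (Set.mem_Ici.2 (le_of_lt (hms (n + 1) (Nat.le_add_left 1 n))))
      (hms (n + 1) (Nat.le_add_left 1 n))
    rw [(hgood n).2.1] at this
    exact this
  -- p recursion and positivity
  have hrec : ∀ n : ℕ, blockP L0 ms (n + 1) = blockP L0 ms n * ovLST L0 ms n (ms (n + 1)) := by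
    intro n
    rw [blockP, blockP, Finset.prod_Icc_succ_top (Nat.le_add_left 1 n)]
    simp
  have hppos : ∀ n : ℕ, 0 < blockP L0 ms n := by
    intro n
    induction n with
    | zero => simp [blockP]
    | succ n ih => rw [hrec n]; exact mul_pos ih (hℓpos n)
  have hpmono : ∀ n : ℕ, blockP L0 ms (n + 1) ≤ blockP L0 ms n := by
    intro n
    rw [hrec n]
    nlinarith [hppos n, hℓpos n, hℓlt1 n]
  -- l ≥ 0
  have hl0 : 0 ≤ l := le_of_tendsto_of_tendsto tendsto_const_nhds hl
    (Eventually.of_forall fun n => le_of_lt (hℓpos n))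
  obtain ⟨r, hlr, hrs⟩ : ∃ r, l < r ∧ r < s := ⟨(l + s) / 2, by linarith, by linarith⟩
  have hr0 : 0 < r := lt_of_le_of_lt hl0 hlr
  obtain ⟨N, hN⟩ := (hl.eventually_lt_const hlr).exists_forall_of_atTop
  -- geometric bound
  have hgeom : ∀ k : ℕ, blockP L0 ms (N + k) ≤ blockP L0 ms N * r ^ k := by
    intro k
    induction k with
    | zero => simp
    | succ k ih =>
      have h1 : ovLST L0 ms (N + k) (ms (N + k + 1)) ≤ r :=
        le_of_lt (hN (N + k) (Nat.le_add_right N k))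
      calc blockP L0 ms (N + (k + 1))
          = blockP L0 ms (N + k) * ovLST L0 ms (N + k) (ms (N + k + 1)) := by
            rw [← hrec (N + k)]; ring_nf
        _ ≤ (blockP L0 ms N * r ^ k) * r := by
            exact mul_le_mul ih h1 (le_of_lt (hℓpos (N + k)))
              (le_of_lt (mul_pos (hppos N) (pow_pos hr0 k)))
        _ = blockP L0 ms N * r ^ (k + 1) := by ring
  -- reduce to shifted sequence
  rw [← summable_nat_add_iff N]
  have hs0 : 0 < s := lt_trans hr0 hrs
  set C : ℝ := blockP L0 ms N / (c * s ^ (N + 1)) with hC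
  have hC0 : 0 < C := by
    exact div_pos (hppos N) (mul_pos hc (pow_pos hs0 _))
  apply Summable.of_nonneg_of_le
  · intro k
    apply div_nonneg _ (le_of_lt (hms (k + N + 1) (Nat.le_add_left 1 _)))
    have := hpmono (k + N)
    linarith
  · intro k
    show (blockP L0 ms (k + N) - blockP L0 ms (k + N + 1)) / ms (k + N + 1) ≤ C * (r / s) ^ k
    have hms1 : 0 < ms (k + N + 1) := hms _ (Nat.le_add_left 1 _)
    have hmsb : c * s ^ (k + N + 1) ≤ ms (k + N + 1) := hbound _ (Nat.le_add_left 1 _)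
    have h1 : blockP L0 ms (k + N) - blockP L0 ms (k + N + 1) ≤ blockP L0 ms N * r ^ k := by
      have := hppos (k + N + 1)
      have := hgeom k
      rw [Nat.add_comm N k] at this
      linarith
    have h2 : (blockP L0 ms (k + N) - blockP L0 ms (k + N + 1)) / ms (k + N + 1)
        ≤ (blockP L0 ms N * r ^ k) / (c * s ^ (k + N + 1)) := by
      exact div_le_div₀ (le_of_lt (mul_pos (hppos N) (pow_pos hr0 k))) h1
        (mul_pos hc (pow_pos hs0 _)) hmsb
    refine h2.trans (le_of_eq ?_)
    have hpow : s ^ (k + N + 1) = s ^ k * s ^ (N + 1) := by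
      rw [← pow_add]
      congr 1
    have hsne : (s : ℝ) ^ k ≠ 0 := pow_ne_zero _ (ne_of_gt hs0)
    have hsne' : (s : ℝ) ^ (N + 1) ≠ 0 := pow_ne_zero _ (ne_of_gt hs0)
    rw [hC, div_pow, hpow, div_mul_div_comm]
    congr 1
    ring
  · apply Summable.mul_left
    apply summable_geometric_of_lt_one (by positivity)
    rw [div_lt_one hs0]
    exact hrs
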